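/- In the Beltrami–Klein model, the orthoptic curve of the hyperbolic segment with endpoints (±a,0), 0 < a < 1, is the Euclidean ellipse x²/a² + y²(1+a²)/a² = 1 (minus the endpoints), and as a → 1 this curve tends to the curve x² + 2y² = 1, which is a hypercycle of the hyperbolic plane. -/

import Mathlib

open Real Filter

/-- Lorentzian bilinear form of signature (1,2) on coordinate triples. -/
def lor (u v : ℝ × ℝ × ℝ) : ℝ := -(u.1 * v.1) + u.2.1 * v.2.1 + u.2.2 * v.2.2

/-- The orthoptic (Thales) curve of the hyperbolic segment with endpoints `(±a,0)`,
`0 < a < 1`, in the Beltrami–Klein model is the Euclidean ellipse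
`x²/a² + y²(1+a²)/a² = 1`; as `a → 1⁻` its coefficients tend to those of `x² + 2y² = 1`,
which is a hypercycle (a curve of constant hyperbolic distance from the `x`-axis). -/
theorem stmt_18 :
    (∀ a x y u₁ u₂ v₁ v₂ : ℝ, 0 < a → a < 1 → x ^ 2 + y ^ 2 < 1 → y ≠ 0 →
      1 + a * u₁ + 0 * u₂ = 0 → 1 + x * u₁ + y * u₂ = 0 →
      1 + (-a) * v₁ + 0 * v₂ = 0 → 1 + x * v₁ + y * v₂ = 0 →
      -(lor (1, u₁, u₂) (1, v₁, v₂)) /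
          Real.sqrt (lor (1, u₁, u₂) (1, u₁, u₂) * lor (1, v₁, v₂) (1, v₁, v₂))
        = Real.cos (π / 2) →
      x ^ 2 / a ^ 2 + y ^ 2 * (1 + a ^ 2) / a ^ 2 = 1) ∧
    Tendsto (fun a : ℝ => (1 / a ^ 2, (1 + a ^ 2) / a ^ 2))
      (nhdsWithin 1 (Set.Iio 1)) (nhds (1, 2)) ∧
    ∃ d : ℝ, 0 ≤ d ∧ ∀ x y : ℝ, x ^ 2 + 2 * y ^ 2 = 1 → x ^ 2 + y ^ 2 < 1 →
      Real.cosh d = -(lor (1, x, y) (1, x, 0)) /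
        Real.sqrt (lor (1, x, y) (1, x, y) * lor (1, x, 0) (1, x, 0)) := by
  refine ⟨?_, ?_, ?_⟩
  · intro a x y u₁ u₂ v₁ v₂ ha ha1 hin hy e1 e2 e3 e4 hperp
    have ha0 : a ≠ 0 := ne_of_gt ha
    have hu1 : u₁ = -1 / a := by field_simp; linarith
    have hv1 : v₁ = 1 / a := by field_simp; linarith
    have hu2 : u₂ = (x / a - 1) / y := by
      field_simp
      rw [hu1] at e2; field_simp at e2; linarith
    have hv2 : v₂ = (-(x / a) - 1) / y := by
      field_simp
      rw [hv1] at e4; field_simp at e4; linarith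
    -- denominator positive
    have hupos : (0:ℝ) < lor (1, u₁, u₂) (1, u₁, u₂) := by
      simp only [lor, hu1]
      have : 1 < (-1 / a) * (-1 / a) := by
        rw [div_mul_div_comm]; rw [lt_div_iff₀ (by positivity)]; nlinarith
      nlinarith [sq_nonneg u₂]
    have hvpos : (0:ℝ) < lor (1, v₁, v₂) (1, v₁, v₂) := by
      simp only [lor, hv1]
      have : 1 < (1 / a) * (1 / a) := by
        rw [div_mul_div_comm]; rw [lt_div_iff₀ (by positivity)]; nlinarith
      nlinarith [sq_nonneg v₂]
    have hden : Real.sqrt (lor (1, u₁, u₂) (1, u₁, u₂) * lor (1, v₁, v₂) (1, v₁, v₂)) ≠ 0 := by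
      positivity
    rw [Real.cos_pi_div_two, div_eq_zero_iff] at hperp
    have hnum : lor (1, u₁, u₂) (1, v₁, v₂) = 0 := by
      rcases hperp with h | h
      · linarith
      · exact absurd h hden
    simp only [lor, hu1, hu2, hv1, hv2] at hnum
    field_simp at hnum
    have key : x ^ 2 + y ^ 2 * (1 + a ^ 2) = a ^ 2 :=
      mul_left_cancel₀ (pow_ne_zero 2 ha0) (by linear_combination (-a ^ 2) * hnum)
    field_simp
    linarith
  · have h : ContinuousAt (fun a : ℝ => (1 / a ^ 2, (1 + a ^ 2) / a ^ 2)) 1 := by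
      apply ContinuousAt.prodMk
      · exact ContinuousAt.div (by fun_prop) (by fun_prop) (by norm_num)
      · exact ContinuousAt.div (by fun_prop) (by fun_prop) (by norm_num)
    have h2 := h.tendsto
    rw [show ((1:ℝ) / 1 ^ 2, ((1:ℝ) + 1 ^ 2) / 1 ^ 2) = ((1:ℝ), 2) by norm_num] at h2
    exact h2.mono_left nhdsWithin_le_nhds
  · refine ⟨Real.log (1 + Real.sqrt 2), Real.log_nonneg (by nlinarith [Real.sqrt_nonneg 2]), ?_⟩
    intro x y hell hin
    have hy : y ≠ 0 := by
      intro h; rw [h] at hell hin; norm_num at hell hin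
      rcases hell with h1 | h1 <;> rw [h1] at hin <;> norm_num at hin
    have h2 : Real.sqrt 2 ^ 2 = 2 := Real.sq_sqrt (by norm_num)
    have h2pos : (0:ℝ) < Real.sqrt 2 := Real.sqrt_pos.mpr (by norm_num)
    have hcosh : Real.cosh (Real.log (1 + Real.sqrt 2)) = Real.sqrt 2 := by
      rw [Real.cosh_log (by positivity)]
      have hi : (1 + Real.sqrt 2)⁻¹ = Real.sqrt 2 - 1 := by
        rw [inv_eq_one_div, div_eq_iff (by positivity)]
        nlinarith
      rw [hi]; ring
    rw [hcosh]
    have hl1 : lor (1, x, y) (1, x, 0) = -1 + x ^ 2 := by simp [lor]; ring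
    have hl2 : lor (1, x, y) (1, x, y) = -(y ^ 2) := by simp [lor]; nlinarith
    have hl3 : lor (1, x, 0) (1, x, 0) = -(2 * y ^ 2) := by simp [lor]; nlinarith
    rw [hl1, hl2, hl3]
    have hx2 : -(-1 + x ^ 2) = 2 * y ^ 2 := by nlinarith
    have : -(y ^ 2) * -(2 * y ^ 2) = (Real.sqrt 2 * y ^ 2) ^ 2 := by nlinarith
    rw [hx2, this, Real.sqrt_sq (by positivity)]
    have hy2 : y ^ 2 ≠ 0 := pow_ne_zero 2 hy
    field_simp
    linear_combination h2
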